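/- Let E be a real inner product space and let λ, v̄, ū > 0 be real constants. Let x, ξ : ℝ → E be differentiable trajectories such that for all t: x(t) ≠ ξ(t), ‖x(t) − ξ(t)‖ ≤ λ, ‖x'(t)‖ ≤ v̄, and ‖ξ'(t)‖ ≤ ū. Define the reference velocity v_r(t) := −v̄·(tanh(1.8·‖x(t) − ξ(t)‖/λ))³ · (x(t) − ξ(t))/‖x(t) − ξ(t)‖. Then v_r is differentiable and ‖v_r'(t)‖ ≤ 2.25·v̄·(v̄ + ū)/λ for all t. -/

import Mathlib

private lemma aux_hasDerivAt_tanh (x : ℝ) : HasDerivAt Real.tanh (1 - Real.tanh x ^ 2) x := by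
  have h := (Real.hasDerivAt_sinh x).div (Real.hasDerivAt_cosh x) (Real.cosh_pos x).ne'
  have he : Real.tanh = fun y => Real.sinh y / Real.cosh y :=
    funext fun y => Real.tanh_eq_sinh_div_cosh y
  rw [he]
  convert h using 1
  · rfl
  · rfl
  · rfl
  have hc := Real.cosh_pos x
  have hs := Real.cosh_sq_sub_sinh_sq x
  field_simp

private lemma aux_tanh_nonneg {x : ℝ} (hx : 0 ≤ x) : 0 ≤ Real.tanh x := by
  rw [Real.tanh_eq_sinh_div_cosh]
  exact div_nonneg (Real.sinh_nonneg_iff.2 hx) (Real.cosh_pos x).le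

private lemma aux_tanh_sq_lt_one (x : ℝ) : Real.tanh x ^ 2 < 1 := by
  rw [Real.tanh_eq_sinh_div_cosh, div_pow, div_lt_one (by positivity)]
  nlinarith [Real.cosh_sq_sub_sinh_sq x]

private lemma aux_cosh_double (x : ℝ) : Real.cosh x = 1 + 2 * Real.sinh (x/2) ^ 2 := by
  have h1 := Real.cosh_two_mul (x/2)
  have h2 := Real.cosh_sq (x/2)
  rw [show 2*(x/2) = x by ring] at h1
  linarith

private lemma aux_cosh_ge (x : ℝ) (hx : 0 ≤ x) : 1 + x^2/2 ≤ Real.cosh x := by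
  have h1 := aux_cosh_double x
  have h3 : x/2 ≤ Real.sinh (x/2) := Real.self_le_sinh_iff.2 (by linarith)
  nlinarith [h3]

private lemma aux_sinh_ge (x : ℝ) (hx : 0 ≤ x) : x + x^3/6 ≤ Real.sinh x := by
  have hder : ∀ y : ℝ, HasDerivAt (fun y : ℝ => Real.sinh y - y - y^3/6)
      (Real.cosh y - 1 - y^2/2) y := by
    intro y
    have h := ((Real.hasDerivAt_sinh y).sub (hasDerivAt_id y)).sub
      ((hasDerivAt_pow 3 y).div_const 6)
    convert h using 1
    · rfl
    · rfl
    · rfl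
    simp
    ring
  have hmono : MonotoneOn (fun y : ℝ => Real.sinh y - y - y^3/6) (Set.Ici 0) := by
    apply monotoneOn_of_deriv_nonneg (convex_Ici 0)
    · exact (Continuous.sub (Continuous.sub Real.continuous_sinh continuous_id)
        (by continuity)).continuousOn
    · intro y hy
      exact (hder y).differentiableAt.differentiableWithinAt
    · intro y hy
      rw [interior_Ici] at hy
      rw [(hder y).deriv]
      have := aux_cosh_ge y (le_of_lt hy)
      linarith
  have h0 := hmono (Set.self_mem_Ici) (Set.mem_Ici.2 hx) hx
  simp at h0
  linarith

private lemma aux_cosh_ge4 (x : ℝ) (hx : 0 ≤ x) : 1 + x^2/2 + x^4/24 ≤ Real.cosh x := by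
  have h1 := aux_cosh_double x
  have h3 := aux_sinh_ge (x/2) (by linarith)
  have h4 : (0:ℝ) ≤ x/2 + (x/2)^3/6 := by positivity
  nlinarith [h3, h4, sq_nonneg (x^3)]

private lemma aux_tanh_le (s : ℝ) (hs : 0 ≤ s) : Real.tanh s ≤ s*(15+s^2)/(15+6*s^2) := by
  have hder : ∀ y : ℝ, HasDerivAt (fun y : ℝ => y*(15+y^2)/(15+6*y^2) - Real.tanh y)
      ((225-45*y^2+6*y^4)/(15+6*y^2)^2 - (1 - Real.tanh y^2)) y := by
    intro y
    have hden : (15+6*y^2 : ℝ) ≠ 0 := by positivity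
    have h1 : HasDerivAt (fun y : ℝ => y*(15+y^2)) (15+3*y^2) y := by
      have h := (hasDerivAt_id y).mul ((hasDerivAt_const y (15:ℝ)).add (hasDerivAt_pow 2 y))
      convert h using 1
      · rfl
      · rfl
      · rfl
      simp
      ring
    have h2 : HasDerivAt (fun y : ℝ => 15+6*y^2) (12*y) y := by
      have h := (hasDerivAt_const y (15:ℝ)).add ((hasDerivAt_pow 2 y).const_mul 6)
      convert h using 1
      · rfl
      · rfl
      · rfl
      simp
      ring
    have h3 := (h1.div h2 hden).sub (aux_hasDerivAt_tanh y)
    convert h3 using 2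
    · rfl
    · rfl
    · rfl
    field_simp
    ring
  have hmono : MonotoneOn (fun y : ℝ => y*(15+y^2)/(15+6*y^2) - Real.tanh y) (Set.Ici 0) := by
    apply monotoneOn_of_deriv_nonneg (convex_Ici 0)
    · exact Continuous.continuousOn (by
        have : Differentiable ℝ (fun y : ℝ => y*(15+y^2)/(15+6*y^2) - Real.tanh y) :=
          fun y => (hder y).differentiableAt
        exact this.continuous)
    · intro y hy
      exact (hder y).differentiableAt.differentiableWithinAt
    · intro y hy
      rw [interior_Ici] at hy
      rw [(hder y).deriv]
      have hy0 : (0:ℝ) ≤ y := le_of_lt hy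
      have h1t : 1 - Real.tanh y^2 = 1 / Real.cosh y^2 := by
        rw [Real.tanh_eq_sinh_div_cosh, div_pow]
        have hc := Real.cosh_pos y
        field_simp
        linarith [Real.cosh_sq_sub_sinh_sq y]
      rw [h1t, sub_nonneg, div_le_div_iff₀ (by positivity) (by positivity)]
      have hc4 := aux_cosh_ge4 y hy0
      have hq : (0:ℝ) < 1 + y^2/2 + y^4/24 := by positivity
      have h225 : (0:ℝ) < 225-45*y^2+6*y^4 := by nlinarith [sq_nonneg (y^2 - 15/4)]
      have hcq : (1 + y^2/2 + y^4/24)^2 ≤ Real.cosh y ^ 2 := by nlinarith [hc4, hq]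
      have hP : (15+6*y^2)^2 ≤ (1 + y^2/2 + y^4/24)^2 * (225-45*y^2+6*y^4) := by
        nlinarith [sq_nonneg (y^3), sq_nonneg (y^4), sq_nonneg (y^5), sq_nonneg (y^6)]
      calc 1 * (15+6*y^2)^2 = (15+6*y^2)^2 := one_mul _
        _ ≤ (1 + y^2/2 + y^4/24)^2 * (225-45*y^2+6*y^4) := hP
        _ ≤ Real.cosh y ^2 * (225-45*y^2+6*y^4) :=
            mul_le_mul_of_nonneg_right hcq h225.le
        _ = (225-45*y^2+6*y^4) * Real.cosh y ^2 := by ring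
  have h0 := hmono (Set.self_mem_Ici) (Set.mem_Ici.2 hs) hs
  simp [Real.tanh_zero] at h0
  linarith

private lemma aux_poly (u : ℝ) (h0 : 0 ≤ u) (h1 : u ≤ 81/25) :
    2*u*(15+u)^3 ≤ (15+6*u)^3 := by
  nlinarith [sq_nonneg (u - 2), sq_nonneg (u - 21/10), mul_nonneg h0 (sub_nonneg.2 h1),
    mul_nonneg (mul_nonneg h0 h0) (sub_nonneg.2 h1), sq_nonneg u,
    mul_nonneg (mul_nonneg h0 (sub_nonneg.2 h1)) (sq_nonneg (u-2)),
    mul_nonneg h0 (sq_nonneg (u-21/10))]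

private lemma aux_tanh_cube {s : ℝ} (h0 : 0 < s) (h1 : s ≤ 1.8) : Real.tanh s ^ 3 ≤ s/2 := by
  have hb := aux_tanh_le s h0.le
  have h3 : Real.tanh s ^3 ≤ (s*(15+s^2)/(15+6*s^2))^3 :=
    pow_le_pow_left₀ (aux_tanh_nonneg h0.le) hb 3
  refine h3.trans ?_
  rw [div_pow, div_le_div_iff₀ (by positivity) two_pos]
  have hs2 : s^2 ≤ 81/25 := by nlinarith
  have hu := aux_poly (s^2) (sq_nonneg s) hs2
  nlinarith [mul_le_mul_of_nonneg_left hu h0.le]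

set_option maxHeartbeats 1000000 in
private lemma aux_key
    {E : Type*} [NormedAddCommGroup E] [InnerProductSpace ℝ E]
    (lam vbar ubar : ℝ) (hlam : 0 < lam) (hvbar : 0 < vbar) (hubar : 0 < ubar)
    (x ξ : ℝ → E) (hx : Differentiable ℝ x) (hξ : Differentiable ℝ ξ)
    (hne : ∀ t : ℝ, x t ≠ ξ t)
    (hball : ∀ t : ℝ, ‖x t - ξ t‖ ≤ lam)
    (hxv : ∀ t : ℝ, ‖deriv x t‖ ≤ vbar)
    (hξv : ∀ t : ℝ, ‖deriv ξ t‖ ≤ ubar) :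
    ∀ t : ℝ, ∃ D : E,
      HasDerivAt (fun t : ℝ =>
        (-(vbar * (Real.tanh (1.8 * (‖x t - ξ t‖ / lam))) ^ 3 / ‖x t - ξ t‖)) • (x t - ξ t)) D t ∧
      ‖D‖ ≤ 2.25 * vbar * (vbar + ubar) / lam := by
  intro t
  set w : E := x t - ξ t with hw_def
  have hw0 : w ≠ 0 := sub_ne_zero.2 (hne t)
  set r : ℝ := ‖w‖ with hr_def
  have hr : 0 < r := norm_pos_iff.2 hw0
  set w' : E := deriv x t - deriv ξ t with hw'_def
  have hw : HasDerivAt (fun t => x t - ξ t) w' t := ((hx t).hasDerivAt).sub ((hξ t).hasDerivAt)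
  set c : ℝ := (inner ℝ w w' : ℝ) with hc_def
  have hnsq : HasDerivAt (fun t : ℝ => ‖x t - ξ t‖ ^ 2) (2 * c) t := hw.norm_sq
  have hn : HasDerivAt (fun t : ℝ => ‖x t - ξ t‖) (c / r) t := by
    have h := hnsq.sqrt (by positivity : (‖x t - ξ t‖:ℝ)^2 ≠ 0)
    have he : (fun t : ℝ => Real.sqrt (‖x t - ξ t‖^2)) = fun t : ℝ => ‖x t - ξ t‖ := by
      funext s; exact Real.sqrt_sq (norm_nonneg _)
    rw [he] at h
    convert h using 1
    rw [Real.sqrt_sq (norm_nonneg _)]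
    rw [show ‖x t - ξ t‖ = r from rfl]
    field_simp [hr.ne']
  set K : ℝ := 1.8 * (1 / lam) with hK
  set T : ℝ := Real.tanh (1.8 * (r / lam)) with hT
  set φd : ℝ := -((vbar * (3 * T ^ 2 * ((1 - T ^ 2) * K)) * r - vbar * T ^ 3 * 1) / r ^ 2)
    with hφd
  have hφ : HasDerivAt (fun s : ℝ => -(vbar * Real.tanh (1.8 * (s / lam)) ^ 3 / s)) φd r := by
    have ha : HasDerivAt (fun s : ℝ => 1.8 * (s / lam)) K r :=
      ((hasDerivAt_id r).div_const lam).const_mul 1.8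
    have hb : HasDerivAt (fun s : ℝ => Real.tanh (1.8 * (s / lam))) ((1 - T^2) * K) r :=
      (aux_hasDerivAt_tanh _).comp r ha
    have hc3 : HasDerivAt (fun s : ℝ => Real.tanh (1.8 * (s / lam)) ^ 3)
        (3 * T ^ 2 * ((1 - T^2) * K)) r := by
      have h := hb.pow 3
      convert h using 1
      all_goals norm_num [hT]
      all_goals rfl
    exact ((hc3.const_mul vbar).div (hasDerivAt_id r) hr.ne').neg
  have hcomp : HasDerivAt
      (fun t : ℝ => -(vbar * Real.tanh (1.8 * (‖x t - ξ t‖ / lam)) ^ 3 / ‖x t - ξ t‖))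
      (φd * (c / r)) t := by have := hφ.comp t hn; exact this
  have hD : HasDerivAt (fun t : ℝ =>
      (-(vbar * (Real.tanh (1.8 * (‖x t - ξ t‖ / lam))) ^ 3 / ‖x t - ξ t‖)) • (x t - ξ t))
      ((-(vbar * T ^ 3 / r)) • w' + (φd * (c / r)) • w) t := hcomp.smul hw
  refine ⟨_, hD, ?_⟩
  -- bound the derivative
  set p : E := w' - (c / r^2) • w with hp_def
  have hT1 : T ^ 2 ≤ 1 := (aux_tanh_sq_lt_one _).le
  have hT0 : 0 ≤ T := aux_tanh_nonneg (by positivity)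
  set a : ℝ := ‖w'‖ with ha_def
  have ha0 : (0:ℝ) ≤ a := norm_nonneg _
  have hcs : |c| ≤ r * a := abs_real_inner_le_norm w w'
  have hnp : ‖p‖ ≤ a := by
    have hexp : ‖p‖^2 = a^2 - 2 * (c/r^2) * c + (c/r^2)^2 * r^2 := by
      rw [hp_def, norm_sub_sq_real, real_inner_smul_right, real_inner_comm, norm_smul]
      rw [Real.norm_eq_abs, mul_pow, sq_abs]
      ring
    have hsq : ‖p‖^2 ≤ a^2 := by
      rw [hexp]
      have : 2 * (c/r^2) * c - (c/r^2)^2 * r^2 = c^2 / r^2 := by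
        field_simp
        ring
      linarith [this, div_nonneg (sq_nonneg c) (sq_nonneg r)]
    nlinarith [norm_nonneg p, ha0, hsq]
  have hw'b : a ≤ vbar + ubar := (norm_sub_le _ _).trans (add_le_add (hxv t) (hξv t))
  -- decomposition
  have hdec : (-(vbar * T ^ 3 / r)) • w' + (φd * (c / r)) • w
      = (-(vbar * T ^ 3 / r)) • p + ((c / r) * (-(3 * vbar * T^2 * (1 - T^2) * K)) / r) • w := by
    rw [hp_def, hφd]
    match_scalars <;> field_simp <;> ring
  rw [hdec]
  have hbound1 : ‖(-(vbar * T ^ 3 / r)) • p‖ ≤ (0.9 * vbar / lam) * a := by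
    rw [norm_smul, Real.norm_eq_abs, abs_neg, abs_of_nonneg (by positivity)]
    have hcube : Real.tanh (1.8 * (r / lam)) ^ 3 ≤ (1.8 * (r / lam)) / 2 := by
      apply aux_tanh_cube (by positivity)
      have : r / lam ≤ 1 := (div_le_one hlam).2 (hball t)
      nlinarith
    rw [← hT] at hcube
    have hcube' : T ^ 3 * lam ≤ 0.9 * r := by
      have h2 := mul_le_mul_of_nonneg_right hcube hlam.le
      have h3 : (1.8 * (r / lam)) / 2 * lam = 0.9 * r := by
        field_simp
        ring
      linarith [h3 ▸ h2]
    have h1 : vbar * T ^ 3 / r ≤ 0.9 * vbar / lam := by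
      rw [div_le_div_iff₀ hr hlam]
      nlinarith [hcube', hvbar.le]
    exact mul_le_mul h1 hnp (norm_nonneg p) (by positivity)
  have hbound2 : ‖((c / r) * (-(3 * vbar * T^2 * (1 - T^2) * K)) / r) • w‖
      ≤ (1.35 * vbar / lam) * a := by
    rw [norm_smul, Real.norm_eq_abs, ← hr_def]
    have hKnn : (0:ℝ) ≤ K := by positivity
    have hfnn : (0:ℝ) ≤ 3 * vbar * T^2 * (1 - T^2) * K :=
      mul_nonneg (mul_nonneg (mul_nonneg (by positivity) (sq_nonneg T)) (by linarith)) hKnn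
    have habs : |(c / r) * (-(3 * vbar * T^2 * (1 - T^2) * K)) / r|
        = (|c| / r) * (3 * vbar * T^2 * (1 - T^2) * K) / r := by
      rw [abs_div, abs_mul, abs_neg, abs_of_nonneg hfnn, abs_div,
        abs_of_nonneg hr.le]
    rw [habs]
    have hfac : 3 * vbar * T^2 * (1 - T^2) * K ≤ 1.35 * vbar / lam := by
      have h34 : T^2 * (1 - T^2) ≤ 1/4 := by nlinarith [sq_nonneg (T^2 - 1/2)]
      rw [le_div_iff₀ hlam]
      have he2 : 3 * vbar * T^2 * (1 - T^2) * K * lam = (3 * 1.8) * vbar * (T^2 * (1 - T^2)) := by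
        rw [hK]
        field_simp
      rw [he2]
      nlinarith [h34, hvbar.le]
    have hcr : |c| / r ≤ a := by
      rw [div_le_iff₀ hr]
      linarith [hcs]
    calc (|c| / r) * (3 * vbar * T^2 * (1 - T^2) * K) / r * r
        = (|c| / r) * (3 * vbar * T^2 * (1 - T^2) * K) := by field_simp [hr.ne']
      _ ≤ a * (1.35 * vbar / lam) :=
          mul_le_mul hcr hfac hfnn ha0
      _ = (1.35 * vbar / lam) * a := by ring
  calc ‖(-(vbar * T ^ 3 / r)) • p + ((c / r) * (-(3 * vbar * T^2 * (1 - T^2) * K)) / r) • w‖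
      ≤ ‖(-(vbar * T ^ 3 / r)) • p‖ + ‖((c / r) * (-(3 * vbar * T^2 * (1 - T^2) * K)) / r) • w‖ :=
        norm_add_le _ _
    _ ≤ (0.9 * vbar / lam) * a + (1.35 * vbar / lam) * a := add_le_add hbound1 hbound2
    _ = 2.25 * vbar * a / lam := by ring
    _ ≤ 2.25 * vbar * (vbar + ubar) / lam := by
        rw [div_le_div_iff₀ hlam hlam]
        nlinarith [mul_le_mul_of_nonneg_left hw'b
          (by positivity : (0:ℝ) ≤ 2.25 * vbar * lam), hlam.le]
/-- Reference-acceleration bound (Appendix B): for the velocity-level confinement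
law `v_r(t) = -v̄·tanh³(1.8·‖x t − ξ t‖/λ)·(x t − ξ t)/‖x t − ξ t‖`, the time
derivative of `v_r` is uniformly bounded by `2.25·v̄·(v̄ + ū)/λ`. -/
theorem reference_acceleration_bound
    {E : Type*} [NormedAddCommGroup E] [InnerProductSpace ℝ E]
    (lam vbar ubar : ℝ) (hlam : 0 < lam) (hvbar : 0 < vbar) (hubar : 0 < ubar)
    (x ξ : ℝ → E) (hx : Differentiable ℝ x) (hξ : Differentiable ℝ ξ)
    (hne : ∀ t : ℝ, x t ≠ ξ t)
    (hball : ∀ t : ℝ, ‖x t - ξ t‖ ≤ lam)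
    (hxv : ∀ t : ℝ, ‖deriv x t‖ ≤ vbar)
    (hξv : ∀ t : ℝ, ‖deriv ξ t‖ ≤ ubar) :
    Differentiable ℝ (fun t : ℝ =>
      (-(vbar * (Real.tanh (1.8 * (‖x t - ξ t‖ / lam))) ^ 3 / ‖x t - ξ t‖)) • (x t - ξ t)) ∧
    ∀ t : ℝ, ‖deriv (fun t : ℝ =>
      (-(vbar * (Real.tanh (1.8 * (‖x t - ξ t‖ / lam))) ^ 3 / ‖x t - ξ t‖)) • (x t - ξ t)) t‖
        ≤ 2.25 * vbar * (vbar + ubar) / lam := by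
  have key := aux_key lam vbar ubar hlam hvbar hubar x ξ hx hξ hne hball hxv hξv
  refine ⟨fun t => ((key t).choose_spec.1).differentiableAt, fun t => ?_⟩
  obtain ⟨D, hD, hb⟩ := key t
  rw [hD.deriv]
  exact hb
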